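/- A state φ ∈ (ℂ^D)^{⊗n} is 1-uniform (critical) if and only if ⟨φ| E |φ⟩ = 0 for every E in the Lie algebra of SL(D)^{⊗n}, i.e., for every operator of the form E₁⊗I⊗⋯⊗I + I⊗E₂⊗⋯⊗I + ⋯ + I⊗⋯⊗E_n with each E_i traceless. -/

import Mathlib

open scoped BigOperators
noncomputable section

/-- Reduced density matrix of `ψ` on the sites in `S` (up to a uniform positive factor),
in the "merged index" representation: entries only depend on `a, b` through their values on `S`. -/
def red {n D : ℕ} (ψ : (Fin n → Fin D) → ℂ) (S : Finset (Fin n)) (a b : Fin n → Fin D) : ℂ :=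
  ∑ f : Fin n → Fin D,
    ψ (fun i => if i ∈ S then a i else f i) *
      (starRingEnd ℂ) (ψ (fun i => if i ∈ S then b i else f i))

/-- The reduction of `ψ` to the sites in `S` is proportional to the identity. -/
def UniformOn {n D : ℕ} (ψ : (Fin n → Fin D) → ℂ) (S : Finset (Fin n)) : Prop :=
  ∃ c : ℂ, ∀ a b, red ψ S a b = if (∀ i ∈ S, a i = b i) then c else 0

/-- `ψ` is `r`-uniform: every reduction to `r` sites is proportional to the identity. -/
def IsUniform {n D : ℕ} (r : ℕ) (ψ : (Fin n → Fin D) → ℂ) : Prop :=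
  ∀ S : Finset (Fin n), S.card = r → UniformOn ψ S

/-- The single-site operator `I ⊗ ⋯ ⊗ E ⊗ ⋯ ⊗ I` with `E` in slot `k`. -/
def siteOp {n D : ℕ} (k : Fin n) (E : Matrix (Fin D) (Fin D) ℂ) :
    Matrix (Fin n → Fin D) (Fin n → Fin D) ℂ :=
  Matrix.of fun f g => if ∀ j, j ≠ k → f j = g j then E (f k) (g k) else 0

variable {n D : ℕ}

def Mred (φ : (Fin n → Fin D) → ℂ) (k : Fin n) (y x : Fin D) : ℂ :=
  ∑ f : Fin n → Fin D, φ (Function.update f k y) * (starRingEnd ℂ) (φ (Function.update f k x))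

lemma siteOp_zero (k : Fin n) : siteOp (D := D) k 0 = 0 := by
  ext f g; simp [siteOp]

lemma siteOp_mulVec (φ : (Fin n → Fin D) → ℂ) (k : Fin n) (E : Matrix (Fin D) (Fin D) ℂ)
    (f : Fin n → Fin D) :
    ((siteOp k E).mulVec φ) f = ∑ y : Fin D, E (f k) y * φ (Function.update f k y) := by
  simp only [Matrix.mulVec, dotProduct, siteOp, Matrix.of_apply, ite_mul, zero_mul]
  rw [Finset.sum_ite, Finset.sum_const_zero, add_zero]
  refine (Finset.sum_nbij' (fun y => Function.update f k y) (fun g => g k) ?_ ?_ ?_ ?_ ?_).symm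
  · intro y _
    simp only [Finset.mem_filter, Finset.mem_univ, true_and]
    intro j hj; simp [Function.update_apply, hj]
  · intro g _; exact Finset.mem_univ _
  · intro y _; simp
  · intro g hg
    simp only [Finset.mem_filter, Finset.mem_univ, true_and] at hg
    funext j
    by_cases hj : j = k
    · subst hj; simp
    · simp [Function.update_apply, hj, hg j hj]
  · intro y _; simp

def updEquiv (k : Fin n) : ((Fin n → Fin D) × Fin D) ≃ ((Fin n → Fin D) × Fin D) where
  toFun p := (Function.update p.1 k p.2, p.1 k)
  invFun p := (Function.update p.1 k p.2, p.1 k)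
  left_inv p := by
    obtain ⟨f, x⟩ := p
    simp [Function.update_idem, Function.update_eq_self]
  right_inv p := by
    obtain ⟨f, x⟩ := p
    simp [Function.update_idem, Function.update_eq_self]

lemma key (φ : (Fin n → Fin D) → ℂ) (k : Fin n) (E : Matrix (Fin D) (Fin D) ℂ) :
    (D : ℂ) * (∑ f, (starRingEnd ℂ) (φ f) * ((siteOp k E).mulVec φ) f)
      = ∑ x : Fin D, ∑ y : Fin D, E x y * Mred φ k y x := by
  have perY : ∀ y : Fin D,
      ∑ x : Fin D, ∑ f : Fin n → Fin D,
        E x y * (φ (Function.update f k y) * (starRingEnd ℂ) (φ (Function.update f k x)))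
      = (D : ℂ) * ∑ f : Fin n → Fin D,
          (starRingEnd ℂ) (φ f) * (E (f k) y * φ (Function.update f k y)) := by
    intro y
    have hcomp := Equiv.sum_comp (updEquiv (D := D) k)
      (fun p => (starRingEnd ℂ) (φ p.1) * (E (p.1 k) y * φ (Function.update p.1 k y)))
    calc ∑ x : Fin D, ∑ f : Fin n → Fin D,
          E x y * (φ (Function.update f k y) * (starRingEnd ℂ) (φ (Function.update f k x)))
        = ∑ p : (Fin n → Fin D) × Fin D,
            ((starRingEnd ℂ) (φ ((updEquiv (D := D) k) p).1) *
              (E (((updEquiv (D := D) k) p).1 k) y *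
                φ (Function.update ((updEquiv (D := D) k) p).1 k y))) := by
          rw [Fintype.sum_prod_type]
          rw [Finset.sum_comm]
          refine Finset.sum_congr rfl fun x _ => Finset.sum_congr rfl fun f _ => ?_
          simp only [updEquiv, Equiv.coe_fn_mk, Function.update_idem, Function.update_self]
          ring
      _ = ∑ p : (Fin n → Fin D) × Fin D,
            ((starRingEnd ℂ) (φ p.1) * (E (p.1 k) y * φ (Function.update p.1 k y))) := hcomp
      _ = (D : ℂ) * ∑ f : Fin n → Fin D,
            (starRingEnd ℂ) (φ f) * (E (f k) y * φ (Function.update f k y)) := by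
          rw [Fintype.sum_prod_type]
          simp [Finset.sum_const, mul_comm]
          rw [Finset.mul_sum]
  calc (D : ℂ) * (∑ f, (starRingEnd ℂ) (φ f) * ((siteOp k E).mulVec φ) f)
      = ∑ y : Fin D, (D : ℂ) * ∑ f : Fin n → Fin D,
          (starRingEnd ℂ) (φ f) * (E (f k) y * φ (Function.update f k y)) := by
        simp_rw [siteOp_mulVec, Finset.mul_sum]
        exact Finset.sum_comm
    _ = ∑ y : Fin D, ∑ x : Fin D, ∑ f : Fin n → Fin D,
          E x y * (φ (Function.update f k y) * (starRingEnd ℂ) (φ (Function.update f k x))) := by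
        exact Finset.sum_congr rfl fun y _ => (perY y).symm
    _ = ∑ x : Fin D, ∑ y : Fin D, E x y * Mred φ k y x := by
        rw [Finset.sum_comm]
        refine Finset.sum_congr rfl fun x _ => Finset.sum_congr rfl fun y _ => ?_
        rw [Mred, Finset.mul_sum]

lemma red_singleton (φ : (Fin n → Fin D) → ℂ) (k : Fin n) (a b : Fin n → Fin D) :
    red φ {k} a b = Mred φ k (a k) (b k) := by
  unfold red Mred
  refine Finset.sum_congr rfl fun f _ => ?_
  have h1 : (fun i => if i ∈ ({k} : Finset (Fin n)) then a i else f i)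
      = Function.update f k (a k) := by
    funext i; by_cases h : i = k <;> simp [h, Function.update_apply]
  have h2 : (fun i => if i ∈ ({k} : Finset (Fin n)) then b i else f i)
      = Function.update f k (b k) := by
    funext i; by_cases h : i = k <;> simp [h, Function.update_apply]
  rw [h1, h2]

theorem stmt_2 {n D : ℕ} (φ : (Fin n → Fin D) → ℂ) :
    IsUniform 1 φ ↔
      ∀ Es : Fin n → Matrix (Fin D) (Fin D) ℂ, (∀ k, (Es k).trace = 0) →
        ∑ f : Fin n → Fin D,
          (starRingEnd ℂ) (φ f) * (∑ k : Fin n, ((siteOp k (Es k)).mulVec φ) f) = 0 := by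
  simp only [IsUniform, UniformOn]
  constructor
  · intro h Es hEs
    have hswap : ∑ f : Fin n → Fin D,
          (starRingEnd ℂ) (φ f) * (∑ k : Fin n, ((siteOp k (Es k)).mulVec φ) f)
        = ∑ k : Fin n, ∑ f : Fin n → Fin D,
            (starRingEnd ℂ) (φ f) * ((siteOp k (Es k)).mulVec φ) f := by
      simp_rw [Finset.mul_sum]
      exact Finset.sum_comm
    rw [hswap]
    refine Finset.sum_eq_zero fun k _ => ?_
    rcases Nat.eq_zero_or_pos D with hD | hD
    · subst hD
      haveI : IsEmpty (Fin n → Fin 0) := ⟨fun f => (f k).elim0⟩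
      simp
    · obtain ⟨c, hc⟩ := h {k} (Finset.card_singleton k)
      have hM : ∀ y x : Fin D, Mred φ k y x = if y = x then c else 0 := by
        intro y x
        have := hc (fun _ => y) (fun _ => x)
        rw [red_singleton] at this
        simpa using this
      have h0 : (D : ℂ) * ∑ f, (starRingEnd ℂ) (φ f) * ((siteOp k (Es k)).mulVec φ) f = 0 := by
        rw [key]
        have : ∑ x : Fin D, ∑ y : Fin D, (Es k) x y * Mred φ k y x
            = c * (Es k).trace := by
          simp only [hM, mul_ite, mul_zero]
          rw [Matrix.trace, Finset.mul_sum]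
          refine Finset.sum_congr rfl fun x _ => ?_
          rw [Finset.sum_ite_eq' Finset.univ x fun y => (Es k) x y * c]
          simp [Matrix.diag]
          ring
        rw [this, hEs k, mul_zero]
      have hD' : (D : ℂ) ≠ 0 := Nat.cast_ne_zero.mpr hD.ne'
      exact (mul_eq_zero.mp h0).resolve_left hD'
  · intro h S hS
    obtain ⟨k, rfl⟩ := Finset.card_eq_one.mp hS
    rcases Nat.eq_zero_or_pos D with hD | hD
    · exact ⟨0, fun a b => by subst hD; exact (a k).elim0⟩
    · have hT : ∀ E : Matrix (Fin D) (Fin D) ℂ, E.trace = 0 →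
          ∑ x : Fin D, ∑ y : Fin D, E x y * Mred φ k y x = 0 := by
        intro E hE
        rw [← key φ k E]
        have hEsum := h (fun j => if j = k then E else 0)
          (by intro j; by_cases hj : j = k <;> simp [hj, hE])
        have hsingle : ∀ f, ∑ k' : Fin n,
            ((siteOp k' (if k' = k then E else 0)).mulVec φ) f
            = ((siteOp k E).mulVec φ) f := by
          intro f
          rw [Fintype.sum_eq_single k]
          · simp
          · intro j hj
            simp [hj, siteOp_zero, Matrix.zero_mulVec]
        simp_rw [hsingle] at hEsum
        rw [hEsum, mul_zero]
      have offdiag : ∀ y x : Fin D, y ≠ x → Mred φ k y x = 0 := by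
        intro y x hyx
        have := hT (Matrix.single x y 1)
          (Matrix.trace_single_eq_of_ne x y 1 hyx.symm)
        simpa [Matrix.single, ite_and, Finset.sum_ite_eq] using this
      have diag : ∀ x y : Fin D, Mred φ k x x = Mred φ k y y := by
        intro x y
        by_cases hxy : x = y
        · rw [hxy]
        · have := hT (Matrix.single x x 1 - Matrix.single y y 1)
            (by rw [Matrix.trace_sub, Matrix.trace_single_eq_same,
                Matrix.trace_single_eq_same, sub_self])
          simp only [Matrix.sub_apply, sub_mul, Finset.sum_sub_distrib] at this
          have h1 : ∑ x' : Fin D, ∑ y' : Fin D,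
              Matrix.single x x 1 x' y' * Mred φ k y' x' = Mred φ k x x := by
            simp [Matrix.single, ite_and, Finset.sum_ite_eq]
          have h2 : ∑ x' : Fin D, ∑ y' : Fin D,
              Matrix.single y y 1 x' y' * Mred φ k y' x' = Mred φ k y y := by
            simp [Matrix.single, ite_and, Finset.sum_ite_eq]
          rw [h1, h2] at this
          exact sub_eq_zero.mp this
      refine ⟨Mred φ k ⟨0, hD⟩ ⟨0, hD⟩, fun a b => ?_⟩
      rw [red_singleton]
      by_cases hab : a k = b k
      · rw [hab, diag (b k) ⟨0, hD⟩]
        rw [if_pos]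
        intro i hi
        rw [Finset.mem_singleton] at hi
        subst hi; exact hab
      · rw [offdiag _ _ hab, if_neg]
        intro hcon
        exact hab (hcon k (Finset.mem_singleton_self k))
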